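/- Let F be homogeneous of degree k over F_{q³} with expansion G = f₀ + τf₁ + τ²f₂ over the basis {1,τ,τ²}. In PG(8,q³), the variety V(G) is a cone with vertex the 5-space ⟨Γ^q, Γ^{q²}⟩ and base V(G) ∩ Γ = K, where Γ, Γ^q, Γ^{q²} are the transversal planes of the Bose spread and K is the copy in Γ of the plane variety V(F) of PG(2,q³). That is, a point P ∈ PG(8,q³) lying on a line joining Q ∈ Γ to R ∈ ⟨Γ^q,Γ^{q²}⟩ satisfies G(P)=0 iff F vanishes at the point of PG(2,q³) corresponding to Q, and every point of V(G) lies on such a line. -/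

import Mathlib

open MvPolynomial

lemma aux_hom_eval {K : Type*} [CommRing K] {σ : Type*} [Fintype σ] {P : MvPolynomial σ K} {k : ℕ}
    (hP : P.IsHomogeneous k) (c : K) (x : σ → K) :
    eval (fun i => c * x i) P = c ^ k * eval x P := by
  rw [eval_eq', eval_eq', Finset.mul_sum]
  refine Finset.sum_congr rfl fun d hd => ?_
  rw [mem_support_iff] at hd
  have hdeg : ∑ i, d i = k := by
    have h1 := hP hd
    rw [← h1, Finsupp.weight_apply, Finsupp.sum]
    simp only [Pi.one_apply, smul_eq_mul, mul_one]
    exact (Finset.sum_subset (Finset.subset_univ _)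
      (fun i _ hi => Finsupp.notMem_support_iff.mp hi)).symm
  calc coeff d P * ∏ i, (c * x i) ^ d i
      = coeff d P * ((∏ i, c ^ d i) * ∏ i, x i ^ d i) := by
        rw [← Finset.prod_mul_distrib]; simp [mul_pow]
    _ = c ^ k * (coeff d P * ∏ i, x i ^ d i) := by
        rw [Finset.prod_pow_eq_pow_sum, hdeg]; ring

lemma aux_not_fixed {F K : Type*} [Field F] [Fintype F] [Field K] [Fintype K] [Algebra F K]
    (q : ℕ) (hF : Fintype.card F = q)
    (t₀ t₁ t₂ : F) (τ : K)
    (hirr : Irreducible (Polynomial.X ^ 3 - Polynomial.C t₂ * Polynomial.X ^ 2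
      - Polynomial.C t₁ * Polynomial.X - Polynomial.C t₀))
    (hroot : τ ^ 3 = algebraMap F K t₀ + algebraMap F K t₁ * τ + algebraMap F K t₂ * τ ^ 2)
    (hτq : τ ^ q = τ) : False := by
  classical
  have hq2 : 2 ≤ q := hF ▸ Fintype.one_lt_card
  set Q : Polynomial K := Polynomial.X ^ q - Polynomial.X with hQ
  have hQdeg : Q.natDegree = q := by
    rw [hQ, Polynomial.natDegree_sub_eq_left_of_natDegree_lt] <;>
      simp [Polynomial.natDegree_X_pow, Polynomial.natDegree_X] <;> omega
  have hQne : Q ≠ 0 := fun h => by rw [h, Polynomial.natDegree_zero] at hQdeg; omega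
  have hroots : ∀ x : K, x ^ q = x → x ∈ Q.roots := fun x hx =>
    (Polynomial.mem_roots').mpr ⟨hQne, by simp [hQ, Polynomial.IsRoot, sub_eq_zero, hx]⟩
  set T : Finset K := Finset.univ.image (algebraMap F K) with hT
  have hTsub : T ⊆ Q.roots.toFinset := by
    intro y hy
    rw [hT, Finset.mem_image] at hy
    obtain ⟨c, -, rfl⟩ := hy
    rw [Multiset.mem_toFinset]
    apply hroots
    have hcq : c ^ q = c := by rw [← hF]; exact FiniteField.pow_card c
    rw [← map_pow, hcq]
  have hTcard : T.card = q := by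
    rw [hT, Finset.card_image_of_injective _ (algebraMap F K).injective,
      Finset.card_univ, hF]
  have hrc : Q.roots.toFinset.card ≤ q :=
    le_trans (Multiset.toFinset_card_le _) (le_trans (Polynomial.card_roots' Q) hQdeg.le)
  have hTeq : T = Q.roots.toFinset :=
    Finset.eq_of_subset_of_card_le hTsub (hTcard ▸ hrc)
  have hτT : τ ∈ T := by
    rw [hTeq, Multiset.mem_toFinset]; exact hroots τ hτq
  rw [hT, Finset.mem_image] at hτT
  obtain ⟨c, -, hc⟩ := hτT
  have hcroot : c ^ 3 - t₂ * c ^ 2 - t₁ * c - t₀ = 0 := by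
    apply (algebraMap F K).injective
    rw [map_zero]
    push_cast [map_sub, map_mul, map_pow, hc]
    linear_combination hroot
  set m : Polynomial F := Polynomial.X ^ 3 - Polynomial.C t₂ * Polynomial.X ^ 2
      - Polynomial.C t₁ * Polynomial.X - Polynomial.C t₀ with hm
  have hdvd : (Polynomial.X - Polynomial.C c) ∣ m := by
    apply Polynomial.dvd_iff_isRoot.mpr
    simp [hm, Polynomial.IsRoot, hcroot]
  obtain ⟨g, hg⟩ := hdvd
  have hm3 : m.natDegree = 3 := by
    rw [hm]
    compute_degree!
  rcases hirr.isUnit_or_isUnit hg with hu | hu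
  · exact Polynomial.not_isUnit_X_sub_C c hu
  · have hg0 : g.natDegree = 0 := Polynomial.natDegree_eq_zero_of_isUnit hu
    rw [hg, Polynomial.natDegree_mul (Polynomial.X_sub_C_ne_zero c) hu.ne_zero,
      Polynomial.natDegree_X_sub_C, hg0] at hm3
    omega

/-- With G the expansion over the basis {1,τ,τ²} of a homogeneous
polynomial P of degree k over K = F_{q³}, the variety V(G) ⊂ PG(8,q³) is a cone
with vertex the 5-space ⟨Γ^q, Γ^{q²}⟩ and base the copy K of V(P) in the
transversal plane Γ = ⟨A₀,A₁,A₂⟩: a point xA₀+yA₁+zA₂+R (with (x,y,z) ≠ 0 and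
R in the vertex) lies on V(G) iff P(x,y,z) = 0, and every point of V(G) is of
the form xA₀+yA₁+zA₂+R with R in the vertex and P(x,y,z) = 0. -/
theorem stmt13 {F K : Type*} [Field F] [Fintype F] [Field K] [Fintype K] [Algebra F K]
    (p n q : ℕ) [Fact p.Prime] [CharP K p] [ExpChar K p]
    (hq : q = p ^ n) (hF : Fintype.card F = q) (hK : Fintype.card K = q ^ 3)
    (t₀ t₁ t₂ : F) (τ : K)
    (hirr : Irreducible (Polynomial.X ^ 3 - Polynomial.C t₂ * Polynomial.X ^ 2
      - Polynomial.C t₁ * Polynomial.X - Polynomial.C t₀))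
    (hroot : τ ^ 3 = algebraMap F K t₀ + algebraMap F K t₁ * τ + algebraMap F K t₂ * τ ^ 2)
    (a : Fin 3 → K)
    (ha : a = ![algebraMap F K t₁ + algebraMap F K t₂ * τ - τ ^ 2,
      algebraMap F K t₂ - τ, -1])
    (A : Fin 3 → Fin 3 → Fin 3 → K)
    (hA : ∀ i j l, A i j l = if j = i then a l else 0)
    (φ : K →+* K) (hφ : φ = iterateFrobenius K p n)
    (Fmap : (Fin 3 → Fin 3 → K) → Fin 3 → Fin 3 → K)
    (hFmap : ∀ v j l, Fmap v j l = φ (v j l))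
    (vertex : Submodule K (Fin 3 → Fin 3 → K))
    (hvertex : vertex = Submodule.span K
      (Set.range (fun i => Fmap (A i)) ∪ Set.range (fun i => Fmap (Fmap (A i)))))
    (k : ℕ) (hk : 0 < k) (P : MvPolynomial (Fin 3) K) (hP : P.IsHomogeneous k)
    (G : MvPolynomial (Fin 3 × Fin 3) K)
    (hG : G = aeval (fun i : Fin 3 =>
          ∑ j : Fin 3, C (τ ^ (j : ℕ)) * X (i, j) :
            Fin 3 → MvPolynomial (Fin 3 × Fin 3) K) P) :
    (∀ x y z : K, ¬(x = 0 ∧ y = 0 ∧ z = 0) → ∀ R ∈ vertex,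
      (eval (fun ij : Fin 3 × Fin 3 =>
          (x • A 0 + y • A 1 + z • A 2 + R) ij.1 ij.2) G = 0 ↔
        eval ![x, y, z] P = 0)) ∧
    (∀ v : Fin 3 → Fin 3 → K,
      eval (fun ij : Fin 3 × Fin 3 => v ij.1 ij.2) G = 0 ↔
        ∃ x y z : K, ∃ R ∈ vertex,
          v = x • A 0 + y • A 1 + z • A 2 + R ∧ eval ![x, y, z] P = 0) := by
  classical
  set b₀ := algebraMap F K t₀ with hb₀
  set b₁ := algebraMap F K t₁ with hb₁
  set b₂ := algebraMap F K t₂ with hb₂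
  have n01 : (0 : Fin 3) ≠ 1 := by decide
  have n02 : (0 : Fin 3) ≠ 2 := by decide
  have n10 : (1 : Fin 3) ≠ 0 := by decide
  have n12 : (1 : Fin 3) ≠ 2 := by decide
  have n20 : (2 : Fin 3) ≠ 0 := by decide
  have n21 : (2 : Fin 3) ≠ 1 := by decide
  have hφdef : ∀ x : K, φ x = x ^ q := fun x => by
    rw [hφ, iterateFrobenius_def, hq]
  have hfix : ∀ t : F, φ (algebraMap F K t) = algebraMap F K t := by
    intro t
    rw [hφdef, ← map_pow]
    congr 1
    rw [← hF]; exact FiniteField.pow_card t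
  have hfb₀ : φ b₀ = b₀ := hfix t₀
  have hfb₁ : φ b₁ = b₁ := hfix t₁
  have hfb₂ : φ b₂ = b₂ := hfix t₂
  set σ := φ τ with hσd
  set ρ := φ σ with hρd
  have hσroot : σ ^ 3 = b₀ + b₁ * σ + b₂ * σ ^ 2 := by
    have h := congrArg φ hroot
    simpa only [map_pow, map_add, map_mul, hfb₀, hfb₁, hfb₂] using h
  have hρroot : ρ ^ 3 = b₀ + b₁ * ρ + b₂ * ρ ^ 2 := by
    have h := congrArg φ hσroot
    simpa only [map_pow, map_add, map_mul, hfb₀, hfb₁, hfb₂] using h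
  have hφ3 : ∀ x : K, φ (φ (φ x)) = x := by
    intro x
    rw [hφdef, hφdef, hφdef, ← pow_mul, ← pow_mul]
    have hqq : q * q * q = Fintype.card K := by rw [hK]; ring
    rw [show q * (q * q) = q * q * q by ring, hqq]
    exact FiniteField.pow_card x
  have hτσ : τ ≠ σ := by
    intro h
    have hτq : τ ^ q = τ := by rw [← hφdef]; exact h.symm
    exact aux_not_fixed q hF t₀ t₁ t₂ τ hirr hroot hτq
  have hτρ : τ ≠ ρ := by
    intro h
    exact hτσ ((congrArg φ h).trans (hφ3 τ)).symm
  have hφinj : Function.Injective φ := φ.injective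
  have hσρ : σ ≠ ρ := fun h => hτσ (hφinj h)
  -- values of a and its Frobenius images
  have ha0 : a 0 = b₁ + b₂ * τ - τ ^ 2 := by rw [ha]; simp
  have ha1 : a 1 = b₂ - τ := by rw [ha]; simp
  have ha2 : a 2 = -1 := by rw [ha]; simp
  have hpa0 : φ (a 0) = b₁ + b₂ * σ - σ ^ 2 := by
    rw [ha0]; simp only [map_add, map_sub, map_mul, map_pow, hfb₁, hfb₂]; rfl
  have hpa1 : φ (a 1) = b₂ - σ := by
    rw [ha1]; simp only [map_sub, hfb₂]; rfl
  have hpa2 : φ (a 2) = -1 := by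
    rw [ha2]; simp only [map_neg, map_one]
  have hqa0 : φ (φ (a 0)) = b₁ + b₂ * ρ - ρ ^ 2 := by
    rw [hpa0]; simp only [map_add, map_sub, map_mul, map_pow, hfb₁, hfb₂]; rfl
  have hqa1 : φ (φ (a 1)) = b₂ - ρ := by
    rw [hpa1]; simp only [map_sub, hfb₂]; rfl
  have hqa2 : φ (φ (a 2)) = -1 := by
    rw [hpa2]; simp only [map_neg, map_one]
  -- the two vanishing linear combinations
  have hS1' : (b₁ + b₂ * σ - σ ^ 2) + τ * (b₂ - σ) + τ ^ 2 * (-1) = 0 := by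
    have key : (σ - τ) * ((b₁ + b₂ * σ - σ ^ 2) + τ * (b₂ - σ) + τ ^ 2 * (-1)) = 0 := by
      linear_combination hroot - hσroot
    rcases mul_eq_zero.mp key with h | h
    · exact absurd (sub_eq_zero.mp h).symm hτσ
    · exact h
  have hS2' : (b₁ + b₂ * ρ - ρ ^ 2) + τ * (b₂ - ρ) + τ ^ 2 * (-1) = 0 := by
    have key : (ρ - τ) * ((b₁ + b₂ * ρ - ρ ^ 2) + τ * (b₂ - ρ) + τ ^ 2 * (-1)) = 0 := by
      linear_combination hroot - hρroot
    rcases mul_eq_zero.mp key with h | h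
    · exact absurd (sub_eq_zero.mp h).symm hτρ
    · exact h
  have hS1 : φ (a 0) + τ * φ (a 1) + τ ^ 2 * φ (a 2) = 0 := by
    rw [hpa0, hpa1, hpa2]; linear_combination hS1'
  have hS2 : φ (φ (a 0)) + τ * φ (φ (a 1)) + τ ^ 2 * φ (φ (a 2)) = 0 := by
    rw [hqa0, hqa1, hqa2]; linear_combination hS2'
  -- Vieta
  have hVc : b₂ = τ + σ + ρ := by
    have key : (σ - ρ) * (b₂ - (τ + σ + ρ)) = 0 := by
      linear_combination hS1' - hS2'
    rcases mul_eq_zero.mp key with h | h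
    · exact absurd (sub_eq_zero.mp h) hσρ
    · exact sub_eq_zero.mp h
  have hVb : b₁ = -(τ * σ + τ * ρ + σ * ρ) := by
    linear_combination hS1' - (σ + τ) * hVc
  -- the scalar s
  set s : K := a 0 + τ * a 1 + τ ^ 2 * a 2 with hsd
  have hs_eq : s = -((τ - σ) * (τ - ρ)) := by
    rw [hsd, ha0, ha1, ha2]
    linear_combination 2 * τ * hVc + hVb
  have hs : s ≠ 0 := by
    rw [hs_eq]
    simp only [neg_ne_zero]
    exact mul_ne_zero (sub_ne_zero.mpr hτσ) (sub_ne_zero.mpr hτρ)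
  -- evaluation of G
  have hGeval : ∀ w : Fin 3 × Fin 3 → K,
      eval w G = eval (fun i => ∑ j : Fin 3, τ ^ (j : ℕ) * w (i, j)) P := by
    intro w
    rw [hG, aeval_def, eval_eval₂]
    have h1 : (eval w).comp (algebraMap K (MvPolynomial (Fin 3 × Fin 3) K)) = RingHom.id K := by
      ext r
      simp [MvPolynomial.algebraMap_eq]
    rw [h1, eval₂_id]
    have h2 : (fun i => eval w (∑ j : Fin 3, C (τ ^ (j : ℕ)) * X (i, j)))
        = fun i => ∑ j : Fin 3, τ ^ (j : ℕ) * w (i, j) := by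
      funext i; simp
    rw [h2]
  -- rows of elements of the vertex
  have hvert : ∀ R ∈ vertex, ∀ r : Fin 3, ∑ j : Fin 3, τ ^ (j : ℕ) * R r j = 0 := by
    intro R hR
    rw [hvertex] at hR
    refine Submodule.span_induction ?_ ?_ ?_ ?_ hR
    · rintro u hu r
      rcases hu with ⟨i, rfl⟩ | ⟨i, rfl⟩
      · simp only [hFmap, hA]
        by_cases h : r = i
        · subst h
          rw [Fin.sum_univ_three]
          simp only [eq_self_iff_true, if_true, ite_true, Fin.val_zero, Fin.val_one, Fin.val_two,
            pow_zero, pow_one, one_mul]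
          linear_combination hS1
        · simp [h]
      · simp only [hFmap, hA]
        by_cases h : r = i
        · subst h
          rw [Fin.sum_univ_three]
          simp only [eq_self_iff_true, if_true, ite_true, Fin.val_zero, Fin.val_one, Fin.val_two,
            pow_zero, pow_one, one_mul]
          linear_combination hS2
        · simp [h]
    · intro r; simp
    · intro u v _ _ hu hv r
      simp only [Pi.add_apply, mul_add, Finset.sum_add_distrib, hu r, hv r, add_zero]
    · intro c v _ hv r
      have hc : ∑ j : Fin 3, τ ^ (j : ℕ) * (c * v r j)
          = c * ∑ j : Fin 3, τ ^ (j : ℕ) * v r j := by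
        rw [Finset.mul_sum]; exact Finset.sum_congr rfl fun j _ => by ring
      simp only [Pi.smul_apply, smul_eq_mul, hc, hv r, mul_zero]
  -- main evaluation identity
  have hmain : ∀ (x y z : K) (R : Fin 3 → Fin 3 → K), R ∈ vertex →
      eval (fun ij : Fin 3 × Fin 3 => (x • A 0 + y • A 1 + z • A 2 + R) ij.1 ij.2) G
        = s ^ k * eval ![x, y, z] P := by
    intro x y z R hR
    rw [hGeval]
    have hexp : ∀ i jj : Fin 3, (x • A 0 + y • A 1 + z • A 2 + R) i jj
        = x * (if i = 0 then a jj else 0) + y * (if i = 1 then a jj else 0)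
          + z * (if i = 2 then a jj else 0) + R i jj := by
      intro i jj
      simp only [Pi.add_apply, Pi.smul_apply, smul_eq_mul, hA]
    have hR0 := hvert R hR 0
    have hR1 := hvert R hR 1
    have hR2 := hvert R hR 2
    rw [Fin.sum_univ_three] at hR0 hR1 hR2
    simp only [Fin.val_zero, Fin.val_one, Fin.val_two, pow_zero, pow_one, one_mul]
      at hR0 hR1 hR2
    have hWc : ∀ i : Fin 3,
        (∑ j : Fin 3, τ ^ (j : ℕ) * (x • A 0 + y • A 1 + z • A 2 + R) i j)
          = s * ![x, y, z] i := by
      have h0 : (∑ j : Fin 3, τ ^ (j : ℕ) * (x • A 0 + y • A 1 + z • A 2 + R) 0 j)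
          = s * ![x, y, z] 0 := by
        rw [Fin.sum_univ_three, hexp, hexp, hexp, hsd]
        simp only [eq_self_iff_true, if_true, ite_true, if_neg n01, if_neg n02, Fin.val_zero, Fin.val_one, Fin.val_two,
          pow_zero, pow_one, one_mul, mul_zero, add_zero, zero_add, Matrix.cons_val_zero]
        linear_combination hR0
      have h1 : (∑ j : Fin 3, τ ^ (j : ℕ) * (x • A 0 + y • A 1 + z • A 2 + R) 1 j)
          = s * ![x, y, z] 1 := by
        rw [Fin.sum_univ_three, hexp, hexp, hexp, hsd]
        simp only [eq_self_iff_true, if_true, ite_true, if_neg n10, if_neg n12, Fin.val_zero, Fin.val_one, Fin.val_two,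
          pow_zero, pow_one, one_mul, mul_zero, add_zero, zero_add, Matrix.cons_val_one,
          Matrix.head_cons, Matrix.cons_val_zero]
        linear_combination hR1
      have h2 : (∑ j : Fin 3, τ ^ (j : ℕ) * (x • A 0 + y • A 1 + z • A 2 + R) 2 j)
          = s * ![x, y, z] 2 := by
        rw [Fin.sum_univ_three, hexp, hexp, hexp, hsd]
        simp only [eq_self_iff_true, if_true, ite_true, if_neg n20, if_neg n21, Fin.val_zero, Fin.val_one, Fin.val_two,
          pow_zero, pow_one, one_mul, mul_zero, add_zero, zero_add]
        have hv2 : ![x, y, z] 2 = z := rfl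
        rw [hv2]
        linear_combination hR2
      intro i
      fin_cases i
      · exact h0
      · exact h1
      · exact h2
    exact (congrArg (fun f => eval f P) (funext hWc)).trans (aux_hom_eval hP s ![x, y, z])
  -- decomposition of row vectors with vanishing τ-combination
  have hdecomp : ∀ r : Fin 3 → K, r 0 + τ * r 1 + τ ^ 2 * r 2 = 0 →
      ∃ α β : K, ∀ j, r j = α * φ (a j) + β * φ (φ (a j)) := by
    intro r hr
    have hσρ' : σ - ρ ≠ 0 := sub_ne_zero.mpr hσρ
    refine ⟨(-(r 1) - (b₂ - ρ) * r 2) / (σ - ρ), (r 1 + (b₂ - σ) * r 2) / (σ - ρ), ?_⟩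
    have hr0 : r 0 = -(τ * r 1) - τ ^ 2 * r 2 := by linear_combination hr
    have h0 : r 0 = (-(r 1) - (b₂ - ρ) * r 2) / (σ - ρ) * φ (a 0)
        + (r 1 + (b₂ - σ) * r 2) / (σ - ρ) * φ (φ (a 0)) := by
      rw [hqa0, hpa0, hr0, hVc, hVb]
      field_simp
      ring
    have h1 : r 1 = (-(r 1) - (b₂ - ρ) * r 2) / (σ - ρ) * φ (a 1)
        + (r 1 + (b₂ - σ) * r 2) / (σ - ρ) * φ (φ (a 1)) := by
      rw [hqa1, hpa1]
      field_simp
      ring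
    have h2 : r 2 = (-(r 1) - (b₂ - ρ) * r 2) / (σ - ρ) * φ (a 2)
        + (r 1 + (b₂ - σ) * r 2) / (σ - ρ) * φ (φ (a 2)) := by
      rw [hqa2, hpa2]
      field_simp
      ring
    intro j
    fin_cases j
    · exact h0
    · exact h1
    · exact h2
  -- membership criterion for the vertex
  have hmem : ∀ u : Fin 3 → Fin 3 → K,
      (∀ r : Fin 3, u r 0 + τ * u r 1 + τ ^ 2 * u r 2 = 0) → u ∈ vertex := by
    intro u hu
    choose α β hαβ using fun r => hdecomp (u r) (hu r)
    have hgen0 : ∀ jj : Fin 3,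
        (∑ i : Fin 3, (α i • Fmap (A i) + β i • Fmap (Fmap (A i)))) 0 jj
          = α 0 * φ (a jj) + β 0 * φ (φ (a jj)) := by
      intro jj
      simp [Finset.sum_apply, Fin.sum_univ_three, hFmap, hA, n10, n20]
    have hgen1 : ∀ jj : Fin 3,
        (∑ i : Fin 3, (α i • Fmap (A i) + β i • Fmap (Fmap (A i)))) 1 jj
          = α 1 * φ (a jj) + β 1 * φ (φ (a jj)) := by
      intro jj
      simp [Finset.sum_apply, Fin.sum_univ_three, hFmap, hA, n01, n21]
    have hgen2 : ∀ jj : Fin 3,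
        (∑ i : Fin 3, (α i • Fmap (A i) + β i • Fmap (Fmap (A i)))) 2 jj
          = α 2 * φ (a jj) + β 2 * φ (φ (a jj)) := by
      intro jj
      simp [Finset.sum_apply, Fin.sum_univ_three, hFmap, hA, n02, n12]
    have hgen : ∀ r jj : Fin 3,
        (∑ i : Fin 3, (α i • Fmap (A i) + β i • Fmap (Fmap (A i)))) r jj
          = α r * φ (a jj) + β r * φ (φ (a jj)) := by
      intro r
      fin_cases r
      · exact hgen0
      · exact hgen1
      · exact hgen2
    have hueq : u = ∑ i : Fin 3, (α i • Fmap (A i) + β i • Fmap (Fmap (A i))) := by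
      funext r j
      rw [hgen r j]
      exact hαβ r j
    rw [hueq, hvertex]
    refine Submodule.sum_mem _ fun i _ => Submodule.add_mem _ ?_ ?_
    · exact Submodule.smul_mem _ _ (Submodule.subset_span (Or.inl ⟨i, rfl⟩))
    · exact Submodule.smul_mem _ _ (Submodule.subset_span (Or.inr ⟨i, rfl⟩))
  constructor
  · intro x y z _ R hR
    rw [hmain x y z R hR]
    constructor
    · intro h
      rcases mul_eq_zero.mp h with h | h
      · exact absurd h (pow_ne_zero k hs)
      · exact h
    · intro h; rw [h, mul_zero]
  · intro v
    constructor
    · intro hv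
      rw [hGeval] at hv
      have hv' : eval (fun i => ∑ j : Fin 3, τ ^ (j : ℕ) * v i j) P = 0 := hv
      set W : Fin 3 → K := fun i => ∑ j : Fin 3, τ ^ (j : ℕ) * v i j with hWd
      have hWr : ∀ r : Fin 3, W r = v r 0 + τ * v r 1 + τ ^ 2 * v r 2 := by
        intro r
        show (∑ j : Fin 3, τ ^ (j : ℕ) * v r j) = _
        rw [Fin.sum_univ_three]
        simp only [Fin.val_zero, Fin.val_one, Fin.val_two, pow_zero, pow_one, one_mul]
      have key : ∀ i : Fin 3, W i / s * s = W i := fun i => div_mul_cancel₀ _ hs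
      refine ⟨W 0 / s, W 1 / s, W 2 / s,
        v - ((W 0 / s) • A 0 + (W 1 / s) • A 1 + (W 2 / s) • A 2), ?_, ?_, ?_⟩
      · apply hmem
        have hexp : ∀ r jj : Fin 3,
            (v - ((W 0 / s) • A 0 + (W 1 / s) • A 1 + (W 2 / s) • A 2)) r jj
              = v r jj - ((W 0 / s) * (if r = 0 then a jj else 0)
                + (W 1 / s) * (if r = 1 then a jj else 0)
                + (W 2 / s) * (if r = 2 then a jj else 0)) := by
          intro r jj
          simp only [Pi.sub_apply, Pi.add_apply, Pi.smul_apply, smul_eq_mul, hA]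
        have h0 : (v - ((W 0 / s) • A 0 + (W 1 / s) • A 1 + (W 2 / s) • A 2)) 0 0
            + τ * (v - ((W 0 / s) • A 0 + (W 1 / s) • A 1 + (W 2 / s) • A 2)) 0 1
            + τ ^ 2 * (v - ((W 0 / s) • A 0 + (W 1 / s) • A 1 + (W 2 / s) • A 2)) 0 2 = 0 := by
          rw [hexp, hexp, hexp]
          simp only [eq_self_iff_true, if_true, ite_true, if_neg n01, if_neg n02, mul_zero, add_zero, zero_add]
          linear_combination (-1 : K) * hWr 0 - key 0 + W 0 / s * hsd
        have h1 : (v - ((W 0 / s) • A 0 + (W 1 / s) • A 1 + (W 2 / s) • A 2)) 1 0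
            + τ * (v - ((W 0 / s) • A 0 + (W 1 / s) • A 1 + (W 2 / s) • A 2)) 1 1
            + τ ^ 2 * (v - ((W 0 / s) • A 0 + (W 1 / s) • A 1 + (W 2 / s) • A 2)) 1 2 = 0 := by
          rw [hexp, hexp, hexp]
          simp only [eq_self_iff_true, if_true, ite_true, if_neg n10, if_neg n12, mul_zero, add_zero, zero_add]
          linear_combination (-1 : K) * hWr 1 - key 1 + W 1 / s * hsd
        have h2 : (v - ((W 0 / s) • A 0 + (W 1 / s) • A 1 + (W 2 / s) • A 2)) 2 0
            + τ * (v - ((W 0 / s) • A 0 + (W 1 / s) • A 1 + (W 2 / s) • A 2)) 2 1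
            + τ ^ 2 * (v - ((W 0 / s) • A 0 + (W 1 / s) • A 1 + (W 2 / s) • A 2)) 2 2 = 0 := by
          rw [hexp, hexp, hexp]
          simp only [eq_self_iff_true, if_true, ite_true, if_neg n20, if_neg n21, mul_zero, add_zero, zero_add]
          linear_combination (-1 : K) * hWr 2 - key 2 + W 2 / s * hsd
        intro r
        fin_cases r
        · exact h0
        · exact h1
        · exact h2
      · abel
      · have hmul : ∀ i : Fin 3, s * (W i / s) = W i := fun i => by
          rw [mul_comm]; exact key i
        have hWs : (fun i => s * (![W 0 / s, W 1 / s, W 2 / s] i)) = W := by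
          funext i
          fin_cases i
          · exact hmul 0
          · exact hmul 1
          · exact hmul 2
        have h2 := aux_hom_eval hP s ![W 0 / s, W 1 / s, W 2 / s]
        rw [hWs, hv'] at h2
        exact ((mul_eq_zero.mp h2.symm).resolve_left (pow_ne_zero k hs))
    · rintro ⟨x, y, z, R, hR, rfl, hP0⟩
      rw [hmain x y z R hR, hP0, mul_zero]
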